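/- Let μ be an atomless probability measure on ℝ with cumulative distribution function F, let N ≥ 1, and let μ_N be the probability measure on ℝ^N with density (t_1, …, t_N) ↦ N^N · 1_{t_1 ≥ ⋯ ≥ t_N} · ∏_{i=1}^N F(t_N)/F(t_i) with respect to μ^{⊗N} (density 0 where some F(t_i) = 0). Then for every real t with F(t) > 0 and every integer p with 0 ≤ p ≤ N − 1, the μ_N-measure of the set of vectors having exactly p coordinates strictly greater than t equals (N^p / p!) · F(t)^N · (−log F(t))^p. -/

import Mathlib

open MeasureTheory
open scoped ENNReal

/-- The cumulative distribution function of a measure on `ℝ`. -/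
noncomputable def cdf' (μ : Measure ℝ) : ℝ → ℝ := fun x => (μ (Set.Iic x)).toReal

open Set Filter Topology ProbabilityTheory

section OneDim

set_option linter.unusedSectionVars false

variable (μ : Measure ℝ) [IsProbabilityMeasure μ] [NullSingletonClass μ]

lemma cdf'_eq_cdf : cdf' μ = ⇑(cdf μ) := funext fun x => (cdf_eq_real μ x).symm

lemma cdf'_nonneg (x : ℝ) : 0 ≤ cdf' μ x := by rw [cdf'_eq_cdf]; exact cdf_nonneg μ x

lemma cdf'_le_one (x : ℝ) : cdf' μ x ≤ 1 := by rw [cdf'_eq_cdf]; exact cdf_le_one μ x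

lemma cdf'_mono : Monotone (cdf' μ) := by rw [cdf'_eq_cdf]; exact monotone_cdf μ

lemma measurable_cdf' : Measurable (cdf' μ) := (cdf'_mono μ).measurable

lemma ofReal_cdf' (x : ℝ) : ENNReal.ofReal (cdf' μ x) = μ (Iic x) := by
  rw [cdf'_eq_cdf]; exact ofReal_cdf μ x

/-- Key computation: the measure of a sublevel set of the cdf. -/
lemma measure_cdf'_le (u : ℝ) (hu : 0 ≤ u) :
    μ {x | cdf' μ x ≤ u} = ENNReal.ofReal (min u 1) := by
  rcases le_or_gt 1 u with h1 | h1
  · have : {x | cdf' μ x ≤ u} = univ :=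
      eq_univ_of_forall fun x => le_trans (cdf'_le_one μ x) h1
    rw [this, measure_univ, min_eq_right h1, ENNReal.ofReal_one]
  · rw [min_eq_left h1.le]
    rcases eq_empty_or_nonempty {x | cdf' μ x ≤ u} with hS | hS
    · rw [hS, measure_empty]
      symm
      rw [ENNReal.ofReal_eq_zero]
      by_contra h
      push_neg at h
      obtain ⟨x, hx⟩ := ((tendsto_cdf_atBot μ).eventually_lt_const h).exists
      rw [← cdf'_eq_cdf] at hx
      exact (eq_empty_iff_forall_notMem.mp hS x) hx.le
    · obtain ⟨w, hw⟩ : ∃ w, u < cdf' μ w := by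
        obtain ⟨w, hw⟩ := ((tendsto_cdf_atTop μ).eventually_const_lt h1).exists
        exact ⟨w, by rwa [cdf'_eq_cdf]⟩
      have hbdd : BddAbove {x | cdf' μ x ≤ u} := by
        refine ⟨w, fun v hv => ?_⟩
        by_contra hvw
        push_neg at hvw
        exact absurd (le_trans (cdf'_mono μ hvw.le) hv) (not_le.mpr hw)
      set c := sSup {x | cdf' μ x ≤ u} with hc
      have hle : ∀ v, v < c → cdf' μ v ≤ u := by
        intro v hv
        obtain ⟨z, hz, hvz⟩ := exists_lt_of_lt_csSup hS hv
        exact le_trans (cdf'_mono μ hvz.le) hz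
      have hsing : μ {c} = 0 := measure_singleton c
      have hll : Function.leftLim (⇑(cdf μ)) c = cdf μ c := by
        have h0 : (cdf μ).measure {c} = 0 := by rw [measure_cdf]; exact hsing
        rw [StieltjesFunction.measure_singleton, ENNReal.ofReal_eq_zero, sub_nonpos] at h0
        exact le_antisymm ((cdf μ).mono.leftLim_le le_rfl) h0
      have hcle : cdf μ c ≤ u := by
        rw [← hll]
        refine le_of_tendsto ((cdf μ).mono.tendsto_leftLim c) ?_
        filter_upwards [self_mem_nhdsWithin] with v hv
        have := hle v hv
        rwa [cdf'_eq_cdf] at this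
      have hcge : u ≤ cdf μ c := by
        refine ge_of_tendsto (((cdf μ).right_continuous c).tendsto.mono_left
          (nhdsWithin_mono c Ioi_subset_Ici_self)) ?_
        filter_upwards [self_mem_nhdsWithin] with v hv
        by_contra hvu
        push_neg at hvu
        have : v ∈ {x | cdf' μ x ≤ u} := by rw [mem_setOf_eq, cdf'_eq_cdf]; exact hvu.le
        exact absurd (le_csSup hbdd this) (not_le.mpr hv)
      have hcu : cdf' μ c = u := by rw [cdf'_eq_cdf]; exact le_antisymm hcle hcge
      have hsub : {x | cdf' μ x ≤ u} ⊆ Iic c := fun v hv => le_csSup hbdd hv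
      have hsup : Iio c ⊆ {x | cdf' μ x ≤ u} := fun v hv => hle v hv
      refine le_antisymm ?_ ?_
      · calc μ {x | cdf' μ x ≤ u} ≤ μ (Iic c) := measure_mono hsub
          _ = ENNReal.ofReal u := by rw [← ofReal_cdf', hcu]
      · calc ENNReal.ofReal u = μ (Iic c) := by rw [← ofReal_cdf', hcu]
          _ = μ (Iio c) := (measure_congr (Iio_ae_eq_Iic)).symm
          _ ≤ μ {x | cdf' μ x ≤ u} := measure_mono hsup

lemma measure_cdf'_eq_zero : μ {x | cdf' μ x = 0} = 0 := by
  have : {x | cdf' μ x = 0} = {x | cdf' μ x ≤ 0} := by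
    ext x; simp only [mem_setOf_eq]
    exact ⟨fun h => h.le, fun h => le_antisymm h (cdf'_nonneg μ x)⟩
  rw [this, measure_cdf'_le μ 0 le_rfl]
  norm_num

lemma measure_Iic_inter_cdf'_le (s u : ℝ) :
    μ (Iic s ∩ {x | cdf' μ x ≤ u}) = ENNReal.ofReal (min u (cdf' μ s)) := by
  rcases le_or_gt (cdf' μ s) u with h | h
  · have : Iic s ∩ {x | cdf' μ x ≤ u} = Iic s :=
      inter_eq_left.mpr fun v hv => le_trans (cdf'_mono μ hv) h
    rw [this, ← ofReal_cdf', min_eq_right h]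
  · have hsub : {x | cdf' μ x ≤ u} ⊆ Iic s := by
      intro v hv
      simp only [mem_Iic]
      by_contra hvs
      push_neg at hvs
      exact absurd (le_trans (cdf'_mono μ hvs.le) hv) (not_le.mpr h)
    rw [inter_eq_right.mpr hsub]
    rcases le_or_gt 0 u with hu | hu
    · rw [measure_cdf'_le μ u hu, min_eq_left (h.le.trans (cdf'_le_one μ s)),
        min_eq_left h.le]
    · have : {x | cdf' μ x ≤ u} = ∅ :=
        eq_empty_iff_forall_notMem.mpr fun x hx =>
          absurd (le_trans (cdf'_nonneg μ x) hx) (not_le.mpr hu)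
      rw [this, measure_empty]
      symm
      rw [ENNReal.ofReal_eq_zero]
      exact le_trans (min_le_left _ _) hu.le

end OneDim

section MapLemmas

set_option linter.unusedSectionVars false
set_option maxHeartbeats 800000

variable (μ : Measure ℝ) [IsProbabilityMeasure μ] [NullSingletonClass μ]

lemma preimage_Iic_cdf' (u : ℝ) : cdf' μ ⁻¹' (Iic u) = {x | cdf' μ x ≤ u} := rfl

lemma map_restrict_Iic (s : ℝ) :
    (μ.restrict (Iic s)).map (cdf' μ) = volume.restrict (Ioc 0 (cdf' μ s)) := by
  refine Measure.ext_of_Iic _ _ fun u => ?_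
  rw [Measure.map_apply (measurable_cdf' μ) measurableSet_Iic,
    Measure.restrict_apply ((measurable_cdf' μ) measurableSet_Iic),
    Measure.restrict_apply measurableSet_Iic, preimage_Iic_cdf',
    inter_comm, measure_Iic_inter_cdf'_le, inter_comm, Set.Ioc_inter_Iic,
    Real.volume_Ioc, sub_zero, min_comm]

lemma map_restrict_Ioc (t s : ℝ) (hts : t ≤ s) :
    (μ.restrict (Ioc t s)).map (cdf' μ) =
      volume.restrict (Ioc (cdf' μ t) (cdf' μ s)) := by
  refine Measure.ext_of_Iic _ _ fun u => ?_
  rw [Measure.map_apply (measurable_cdf' μ) measurableSet_Iic,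
    Measure.restrict_apply ((measurable_cdf' μ) measurableSet_Iic),
    Measure.restrict_apply measurableSet_Iic, preimage_Iic_cdf',
    inter_comm, inter_comm (Iic u), Set.Ioc_inter_Iic, Real.volume_Ioc]
  rcases lt_or_ge u (cdf' μ t) with h | h
  · have h1 : Ioc t s ∩ {x | cdf' μ x ≤ u} = ∅ := by
      refine eq_empty_iff_forall_notMem.mpr ?_
      rintro v ⟨hv1, hv2⟩
      exact absurd (le_trans (cdf'_mono μ hv1.1.le) hv2) (not_le.mpr h)
    rw [h1, measure_empty]
    symm
    rw [ENNReal.ofReal_eq_zero, sub_nonpos]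
    exact le_trans (min_le_right _ _) h.le
  · have h1 : Ioc t s ∩ {x | cdf' μ x ≤ u} =
        (Iic s ∩ {x | cdf' μ x ≤ u}) \ (Iic t ∩ {x | cdf' μ x ≤ u}) := by
      ext v
      simp only [mem_inter_iff, mem_diff, mem_Ioc, mem_Iic, mem_setOf_eq, not_and]
      constructor
      · rintro ⟨⟨h1, h2⟩, h3⟩
        exact ⟨⟨h2, h3⟩, fun hc _ => absurd h1 (not_lt.mpr hc)⟩
      · rintro ⟨⟨h2, h3⟩, h4⟩
        refine ⟨⟨?_, h2⟩, h3⟩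
        by_contra hc
        exact h4 (not_lt.mp hc) h3
    rw [h1, measure_diff (inter_subset_inter_left _ (Iic_subset_Iic.mpr hts))
      ((measurableSet_Iic.inter (measurableSet_le (measurable_cdf' μ) measurable_const)).nullMeasurableSet)
      (measure_ne_top _ _), measure_Iic_inter_cdf'_le, measure_Iic_inter_cdf'_le,
      min_eq_right h, ← ENNReal.ofReal_sub _ (cdf'_nonneg μ t), min_comm]

lemma map_restrict_Ioi (t : ℝ) :
    (μ.restrict (Ioi t)).map (cdf' μ) = volume.restrict (Ioc (cdf' μ t) 1) := by
  refine Measure.ext_of_Iic _ _ fun u => ?_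
  rw [Measure.map_apply (measurable_cdf' μ) measurableSet_Iic,
    Measure.restrict_apply ((measurable_cdf' μ) measurableSet_Iic),
    Measure.restrict_apply measurableSet_Iic, preimage_Iic_cdf',
    inter_comm, inter_comm (Iic u), Set.Ioc_inter_Iic, Real.volume_Ioc]
  rcases lt_or_ge u (cdf' μ t) with h | h
  · have h1 : Ioi t ∩ {x | cdf' μ x ≤ u} = ∅ := by
      refine eq_empty_iff_forall_notMem.mpr ?_
      rintro v ⟨hv1, hv2⟩
      exact absurd (le_trans (cdf'_mono μ hv1.le) hv2) (not_le.mpr h)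
    rw [h1, measure_empty]
    symm
    rw [ENNReal.ofReal_eq_zero, sub_nonpos]
    exact le_trans (min_le_right _ _) h.le
  · have hu0 : 0 ≤ u := le_trans (cdf'_nonneg μ t) h
    have h1 : Ioi t ∩ {x | cdf' μ x ≤ u} =
        {x | cdf' μ x ≤ u} \ (Iic t ∩ {x | cdf' μ x ≤ u}) := by
      ext v
      simp only [mem_inter_iff, mem_diff, mem_Ioi, mem_Iic, mem_setOf_eq, not_and]
      constructor
      · rintro ⟨h1, h2⟩
        exact ⟨h2, fun hc _ => absurd h1 (not_lt.mpr hc)⟩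
      · rintro ⟨h2, h4⟩
        refine ⟨?_, h2⟩
        by_contra hc
        exact h4 (not_lt.mp hc) h2
    rw [h1, measure_diff inter_subset_right
      ((measurableSet_Iic.inter (measurableSet_le (measurable_cdf' μ) measurable_const)).nullMeasurableSet)
      (measure_ne_top _ _), measure_cdf'_le μ u hu0, measure_Iic_inter_cdf'_le,
      min_eq_right h, ← ENNReal.ofReal_sub _ (cdf'_nonneg μ t), min_comm]

lemma setLIntegral_cdf'_Iic (g : ℝ → ℝ≥0∞) (hg : Measurable g) (s : ℝ) :
    ∫⁻ x in Iic s, g (cdf' μ x) ∂μ = ∫⁻ u in Ioc 0 (cdf' μ s), g u := by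
  have := lintegral_map hg (measurable_cdf' μ) (μ := μ.restrict (Iic s))
  rw [map_restrict_Iic] at this
  exact this.symm

lemma setLIntegral_cdf'_Ioc (g : ℝ → ℝ≥0∞) (hg : Measurable g) (t s : ℝ) (hts : t ≤ s) :
    ∫⁻ x in Ioc t s, g (cdf' μ x) ∂μ = ∫⁻ u in Ioc (cdf' μ t) (cdf' μ s), g u := by
  have := lintegral_map hg (measurable_cdf' μ) (μ := μ.restrict (Ioc t s))
  rw [map_restrict_Ioc μ t s hts] at this
  exact this.symm

lemma setLIntegral_cdf'_Ioi (g : ℝ → ℝ≥0∞) (hg : Measurable g) (t : ℝ) :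
    ∫⁻ x in Ioi t, g (cdf' μ x) ∂μ = ∫⁻ u in Ioc (cdf' μ t) 1, g u := by
  have := lintegral_map hg (measurable_cdf' μ) (μ := μ.restrict (Ioi t))
  rw [map_restrict_Ioi] at this
  exact this.symm

end MapLemmas

section Lebesgue

lemma lintegral_Ioc_pow (n : ℕ) (a : ℝ) (ha : 0 ≤ a) :
    ∫⁻ u in Ioc 0 a, ENNReal.ofReal (u ^ n) =
      ENNReal.ofReal (a ^ (n + 1) / (n + 1)) := by
  have hint : IntegrableOn (fun u : ℝ => u ^ n) (Ioc 0 a) volume :=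
    (continuous_pow n).integrableOn_Ioc
  rw [← ofReal_integral_eq_lintegral_ofReal hint
    ((ae_restrict_iff' measurableSet_Ioc).mpr (ae_of_all _ fun x hx => pow_nonneg hx.1.le n))]
  congr 1
  rw [← intervalIntegral.integral_of_le ha, integral_pow]
  simp

lemma lintegral_Ioc_log_pow (k : ℕ) (b a : ℝ) (hb : 0 < b) (hba : b ≤ a) :
    ∫⁻ u in Ioc b a, ENNReal.ofReal (1 / u * (Real.log u - Real.log b) ^ k) =
      ENNReal.ofReal ((Real.log a - Real.log b) ^ (k + 1) / (k + 1)) := by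
  set f : ℝ → ℝ := fun u => 1 / u * (Real.log u - Real.log b) ^ k with hf
  have hcont : ContinuousOn f (Icc b a) := by
    apply ContinuousOn.mul
    · exact continuousOn_const.div continuousOn_id fun x hx => (hb.trans_le hx.1).ne'
    · exact ((ContinuousOn.sub (fun x hx =>
        (Real.continuousAt_log (hb.trans_le hx.1).ne').continuousWithinAt)
        continuousOn_const).pow k)
  have hderiv : ∀ x ∈ Icc b a,
      HasDerivAt (fun u => (Real.log u - Real.log b) ^ (k + 1) / (k + 1)) (f x) x := by
    intro x hx
    have hx0 : 0 < x := hb.trans_le hx.1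
    have h1 : HasDerivAt (fun u => Real.log u - Real.log b) x⁻¹ x :=
      (Real.hasDerivAt_log hx0.ne').sub_const _
    have h2 := (h1.pow (k + 1)).div_const ((k : ℝ) + 1)
    convert h2 using 1
    · rfl
    · rfl
    · rfl
    have hk : ((k : ℝ) + 1) ≠ 0 := by positivity
    simp only [hf, Nat.add_sub_cancel, Nat.cast_add, Nat.cast_one]
    field_simp [hf]
  have hInt : IntervalIntegrable f volume b a := by
    apply ContinuousOn.intervalIntegrable
    rwa [uIcc_of_le hba]
  have key := intervalIntegral.integral_eq_sub_of_hasDerivAt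
    (fun x hx => hderiv x (by rwa [uIcc_of_le hba] at hx)) hInt
  have hint2 : IntegrableOn f (Ioc b a) volume :=
    (intervalIntegrable_iff_integrableOn_Ioc_of_le hba).mp hInt
  have hnn : 0 ≤ᵐ[volume.restrict (Ioc b a)] f := by
    refine (ae_restrict_iff' measurableSet_Ioc).mpr (ae_of_all _ fun x hx => ?_)
    have hx0 : 0 < x := hb.trans (hx.1)
    have hlog : Real.log b ≤ Real.log x := Real.log_le_log hb hx.1.le
    have : (0:ℝ) ≤ (Real.log x - Real.log b) ^ k := pow_nonneg (by linarith) k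
    have h1x : (0:ℝ) ≤ 1 / x := by positivity
    exact mul_nonneg h1x this
  rw [← ofReal_integral_eq_lintegral_ofReal hint2 hnn]
  congr 1
  rw [← intervalIntegral.integral_of_le hba, key]
  simp

end Lebesgue

section KLemmas

set_option linter.unusedSectionVars false

variable (μ : Measure ℝ) [IsProbabilityMeasure μ] [NullSingletonClass μ]

lemma K1 (M : ℕ) (s : ℝ) :
    ∫⁻ x in Iic s, ENNReal.ofReal (cdf' μ x ^ M) ∂μ =
      ENNReal.ofReal (cdf' μ s ^ (M + 1) / ((M : ℝ) + 1)) := by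
  rw [setLIntegral_cdf'_Iic μ (fun u => ENNReal.ofReal (u ^ M))
    (by measurability) s, lintegral_Ioc_pow M _ (cdf'_nonneg μ s)]

lemma K2 (k : ℕ) (t s : ℝ) (ht : 0 < cdf' μ t) (hts : t ≤ s) :
    ∫⁻ x in Ioc t s,
        ENNReal.ofReal (1 / cdf' μ x * (Real.log (cdf' μ x) - Real.log (cdf' μ t)) ^ k) ∂μ =
      ENNReal.ofReal ((Real.log (cdf' μ s) - Real.log (cdf' μ t)) ^ (k + 1) / ((k : ℝ) + 1)) := by
  have hg : Measurable fun u : ℝ => ENNReal.ofReal (1 / u * (Real.log u - Real.log (cdf' μ t)) ^ k) :=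
    (((measurable_const.div measurable_id)).mul
      ((Real.measurable_log.sub measurable_const).pow_const k)).ennreal_ofReal
  rw [setLIntegral_cdf'_Ioc μ _ hg t s hts,
    lintegral_Ioc_log_pow k _ _ ht (cdf'_mono μ hts)]

lemma K3 (k : ℕ) (t : ℝ) (ht : 0 < cdf' μ t) :
    ∫⁻ x in Ioi t,
        ENNReal.ofReal (1 / cdf' μ x * (Real.log (cdf' μ x) - Real.log (cdf' μ t)) ^ k) ∂μ =
      ENNReal.ofReal ((0 - Real.log (cdf' μ t)) ^ (k + 1) / ((k : ℝ) + 1)) := by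
  have hg : Measurable fun u : ℝ => ENNReal.ofReal (1 / u * (Real.log u - Real.log (cdf' μ t)) ^ k) :=
    (((measurable_const.div measurable_id)).mul
      ((Real.measurable_log.sub measurable_const).pow_const k)).ennreal_ofReal
  rw [setLIntegral_cdf'_Ioi μ _ hg t,
    lintegral_Ioc_log_pow k _ _ ht (cdf'_le_one μ t), Real.log_one]

end KLemmas

section Pi

set_option linter.unusedSectionVars false
set_option maxHeartbeats 1600000

open Classical in
/-- The core density factor `F(v_last)^N / ∏ F(v_i)`. -/
noncomputable def core (μ : Measure ℝ) (N : ℕ) {n : ℕ} (w : Fin (n + 1) → ℝ) : ℝ≥0∞ :=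
  ENNReal.ofReal (cdf' μ (w (Fin.last n)) ^ N / ∏ i, cdf' μ (w i))

open Classical in
noncomputable def gA (μ : Measure ℝ) (N : ℕ) (s : ℝ) {n : ℕ} (w : Fin (n + 1) → ℝ) : ℝ≥0∞ :=
  if Antitone w ∧ ∀ i, w i ≤ s then core μ N w else 0

open Classical in
noncomputable def gC (μ : Measure ℝ) (N q : ℕ) (t s : ℝ) {n : ℕ} (w : Fin (n + 1) → ℝ) : ℝ≥0∞ :=
  if Antitone w ∧ (∀ i, w i ≤ s) ∧ (∀ i : Fin (n + 1), (i : ℕ) < q → t < w i) ∧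
      (∀ i : Fin (n + 1), q ≤ (i : ℕ) → w i ≤ t) then core μ N w else 0

open Classical in
noncomputable def gT (μ : Measure ℝ) (N q : ℕ) (t : ℝ) {n : ℕ} (w : Fin (n + 1) → ℝ) : ℝ≥0∞ :=
  if Antitone w ∧ (∀ i : Fin (n + 1), (i : ℕ) < q → t < w i) ∧
      (∀ i : Fin (n + 1), q ≤ (i : ℕ) → w i ≤ t) then core μ N w else 0

variable (μ : Measure ℝ) [IsProbabilityMeasure μ] [NullSingletonClass μ]

lemma measurableSet_antitone (n : ℕ) : MeasurableSet {w : Fin n → ℝ | Antitone w} := by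
  have : {w : Fin n → ℝ | Antitone w} =
      ⋂ (i : Fin n) (j : Fin n) (_ : i ≤ j), {w : Fin n → ℝ | w j ≤ w i} := by
    ext w
    simp only [mem_setOf_eq, mem_iInter]
    exact ⟨fun h i j hij => h hij, fun h i j hij => h i j hij⟩
  rw [this]
  exact MeasurableSet.iInter fun i => MeasurableSet.iInter fun j =>
    MeasurableSet.iInter fun _ => measurableSet_le (measurable_pi_apply j) (measurable_pi_apply i)

lemma measurable_core (N : ℕ) (n : ℕ) : Measurable (core μ N (n := n)) := by
  apply Measurable.ennreal_ofReal
  exact (((measurable_cdf' μ).comp (measurable_pi_apply _)).pow_const N).div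
    (Finset.measurable_prod _ fun i _ => (measurable_cdf' μ).comp (measurable_pi_apply i))

lemma measurableSet_le_forall (n : ℕ) (s : ℝ) :
    MeasurableSet {w : Fin n → ℝ | ∀ i, w i ≤ s} := by
  have : {w : Fin n → ℝ | ∀ i, w i ≤ s} = ⋂ i, {w : Fin n → ℝ | w i ≤ s} := by
    ext w; simp [mem_iInter]
  rw [this]
  exact MeasurableSet.iInter fun i => measurableSet_le (measurable_pi_apply i) measurable_const

lemma measurableSet_lt_forall (n q : ℕ) (t : ℝ) :
    MeasurableSet {w : Fin n → ℝ | ∀ i : Fin n, (i : ℕ) < q → t < w i} := by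
  have : {w : Fin n → ℝ | ∀ i : Fin n, (i : ℕ) < q → t < w i} =
      ⋂ (i : Fin n) (_ : (i : ℕ) < q), {w : Fin n → ℝ | t < w i} := by
    ext w; simp [mem_iInter]
  rw [this]
  exact MeasurableSet.iInter fun i => MeasurableSet.iInter fun _ =>
    measurableSet_lt measurable_const (measurable_pi_apply i)

lemma measurableSet_le_forall' (n q : ℕ) (t : ℝ) :
    MeasurableSet {w : Fin n → ℝ | ∀ i : Fin n, q ≤ (i : ℕ) → w i ≤ t} := by
  have : {w : Fin n → ℝ | ∀ i : Fin n, q ≤ (i : ℕ) → w i ≤ t} =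
      ⋂ (i : Fin n) (_ : q ≤ (i : ℕ)), {w : Fin n → ℝ | w i ≤ t} := by
    ext w; simp [mem_iInter]
  rw [this]
  exact MeasurableSet.iInter fun i => MeasurableSet.iInter fun _ =>
    measurableSet_le (measurable_pi_apply i) measurable_const

lemma measurable_gA (N : ℕ) (s : ℝ) (n : ℕ) : Measurable (gA μ N s (n := n)) := by
  apply Measurable.ite _ (measurable_core μ N n) measurable_const
  rw [Set.setOf_and]
  exact (measurableSet_antitone (n + 1)).inter (measurableSet_le_forall (n + 1) s)

lemma measurable_gC (N q : ℕ) (t s : ℝ) (n : ℕ) : Measurable (gC μ N q t s (n := n)) := by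
  apply Measurable.ite _ (measurable_core μ N n) measurable_const
  rw [Set.setOf_and, Set.setOf_and, Set.setOf_and]
  exact (measurableSet_antitone (n + 1)).inter ((measurableSet_le_forall (n + 1) s).inter
    ((measurableSet_lt_forall (n + 1) q t).inter (measurableSet_le_forall' (n + 1) q t)))

lemma measurable_gT (N q : ℕ) (t : ℝ) (n : ℕ) : Measurable (gT μ N q t (n := n)) := by
  apply Measurable.ite _ (measurable_core μ N n) measurable_const
  rw [Set.setOf_and, Set.setOf_and]
  exact (measurableSet_antitone (n + 1)).inter ((measurableSet_lt_forall (n + 1) q t).inter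
    (measurableSet_le_forall' (n + 1) q t))

lemma measurable_cons (n : ℕ) :
    Measurable (fun z : ℝ × (Fin n → ℝ) => (Fin.cons z.1 z.2 : Fin (n + 1) → ℝ)) := by
  refine measurable_pi_iff.mpr fun i => ?_
  refine Fin.cases ?_ (fun j => ?_) i
  · simpa using measurable_fst
  · simp only [Fin.cons_succ]
    exact (measurable_pi_apply j).comp measurable_snd

lemma lintegral_pi_succ (n : ℕ) (f : (Fin (n + 1) → ℝ) → ℝ≥0∞) (hf : Measurable f) :
    ∫⁻ v, f v ∂(Measure.pi fun _ : Fin (n + 1) => μ) =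
      ∫⁻ x, ∫⁻ w, f (Fin.cons x w) ∂(Measure.pi fun _ : Fin n => μ) ∂μ := by
  have hp := measurePreserving_piFinSuccAbove (fun _ : Fin (n + 1) => μ) 0
  have hmeas : Measurable fun z : ℝ × (Fin n → ℝ) => f (Fin.cons z.1 z.2) :=
    hf.comp (measurable_cons n)
  have h1 : ∫⁻ v, f v ∂(Measure.pi fun _ : Fin (n + 1) => μ) =
      ∫⁻ z, f (Fin.cons z.1 z.2) ∂(μ.prod (Measure.pi fun _ : Fin n => μ)) := by
    have hv : ∀ v : Fin (n + 1) → ℝ,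
        Fin.cons ((MeasurableEquiv.piFinSuccAbove (fun _ : Fin (n + 1) => ℝ) 0) v).1
        ((MeasurableEquiv.piFinSuccAbove (fun _ : Fin (n + 1) => ℝ) 0) v).2 = v := by
      intro v; simp [MeasurableEquiv.piFinSuccAbove_apply]
    have := hp.lintegral_comp hmeas
    rw [← this]
    refine lintegral_congr fun v => ?_
    exact congrArg f (hv v).symm
  rw [h1, lintegral_prod _ hmeas.aemeasurable]

end Pi

section IA

set_option linter.unusedSectionVars false
set_option maxHeartbeats 1600000

lemma antitone_cons_iff {n : ℕ} (x : ℝ) (w : Fin n → ℝ) :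
    Antitone (Fin.cons x w : Fin (n + 1) → ℝ) ↔ Antitone w ∧ ∀ i, w i ≤ x := by
  constructor
  · intro h
    refine ⟨fun i j hij => ?_, fun i => ?_⟩
    · have := h (Fin.succ_le_succ_iff.mpr hij)
      simpa using this
    · have := h (Fin.zero_le i.succ)
      simpa using this
  · rintro ⟨hw, hx⟩ i j hij
    rcases Fin.eq_zero_or_eq_succ i with rfl | ⟨i', rfl⟩ <;>
      rcases Fin.eq_zero_or_eq_succ j with rfl | ⟨j', rfl⟩
    · exact le_rfl
    · simpa using hx j'
    · exact absurd (Fin.le_zero_iff.mp hij) (Fin.succ_ne_zero i')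
    · simpa using hw (Fin.succ_le_succ_iff.mp hij)

variable (μ : Measure ℝ) [IsProbabilityMeasure μ] [NullSingletonClass μ]

lemma ae_cdf'_ne_zero : ∀ᵐ x ∂μ, cdf' μ x ≠ 0 := by
  rw [ae_iff]
  simp only [not_not]
  exact measure_cdf'_eq_zero μ

lemma IA (M : ℕ) : ∀ (n : ℕ) (s : ℝ),
    ∫⁻ w, gA μ (M + 1) s w ∂(Measure.pi fun _ : Fin (n + 1) => μ) =
      ENNReal.ofReal (cdf' μ s ^ (M + 1) / ((M : ℝ) + 1) ^ (n + 1)) := by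
  intro n
  induction n with
  | zero =>
    intro s
    rw [lintegral_pi_succ μ 0 _ (measurable_gA μ (M + 1) s 0)]
    have hpt : ∀ x : ℝ, (∫⁻ w : Fin 0 → ℝ, gA μ (M + 1) s (Fin.cons x w)
        ∂(Measure.pi fun _ : Fin 0 => μ)) =
        if x ≤ s then ENNReal.ofReal (cdf' μ x ^ (M + 1) / cdf' μ x) else 0 := by
      intro x
      have hm : Measurable fun w : Fin 0 → ℝ => gA μ (M + 1) s (Fin.cons x w) :=
        (measurable_gA μ (M + 1) s 0).comp
          ((measurable_cons 0).comp (measurable_const.prodMk measurable_id))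
      rw [Measure.pi_of_empty, lintegral_dirac' _ hm]
      haveI hss : Subsingleton (Fin (0 + 1)) := ⟨fun a b => Fin.ext (by omega)⟩
      have hA : Antitone (Fin.cons x (isEmptyElim : Fin 0 → ℝ) : Fin 1 → ℝ) :=
        fun i j _ => le_of_eq (congrArg _ (Subsingleton.elim j i))
      simp [gA, core, hA, Fin.forall_fin_one, Fin.prod_univ_one]
    rw [lintegral_congr hpt]
    have hind : (fun x => if x ≤ s then ENNReal.ofReal (cdf' μ x ^ (M + 1) / cdf' μ x) else 0)
        = (Iic s).indicator (fun x => ENNReal.ofReal (cdf' μ x ^ (M + 1) / cdf' μ x)) := by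
      funext x
      simp [Set.indicator_apply, mem_Iic]
    rw [hind, lintegral_indicator measurableSet_Iic]
    have h0r := ae_restrict_of_ae (μ := μ) (s := Iic s) (ae_cdf'_ne_zero μ)
    have hpw : ∫⁻ x in Iic s, ENNReal.ofReal (cdf' μ x ^ (M + 1) / cdf' μ x) ∂μ =
        ∫⁻ x in Iic s, ENNReal.ofReal (cdf' μ x ^ M) ∂μ :=
      lintegral_congr_ae (h0r.mono fun x hx => by
        dsimp only
        rw [pow_succ, mul_div_assoc, div_self hx, mul_one])
    rw [hpw, K1 μ M s, pow_one]
  | succ n ih =>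
    intro s
    rw [lintegral_pi_succ μ (n + 1) _ (measurable_gA μ (M + 1) s (n + 1))]
    have hsplit : ∀ (x : ℝ) (w : Fin (n + 1) → ℝ), gA μ (M + 1) s (Fin.cons x w) =
        if x ≤ s then ENNReal.ofReal (1 / cdf' μ x) * gA μ (M + 1) x w else 0 := by
      intro x w
      by_cases hx : x ≤ s
      · rw [if_pos hx]
        by_cases hw : Antitone w ∧ ∀ i, w i ≤ x
        · have hcons : Antitone (Fin.cons x w : Fin (n + 2) → ℝ) ∧
              ∀ i, (Fin.cons x w : Fin (n + 2) → ℝ) i ≤ s := by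
            refine ⟨(antitone_cons_iff x w).mpr ⟨hw.1, hw.2⟩, fun i => ?_⟩
            rcases Fin.eq_zero_or_eq_succ i with rfl | ⟨j, rfl⟩
            · simpa using hx
            · simpa using (hw.2 j).trans hx
          rw [gA, if_pos hcons, gA, if_pos hw, core, core]
          have hlast : (Fin.cons x w : Fin (n + 2) → ℝ) (Fin.last (n + 1)) = w (Fin.last n) := by
            rw [← Fin.succ_last, Fin.cons_succ]
          have hprod : ∏ i : Fin (n + 2), cdf' μ ((Fin.cons x w : Fin (n + 2) → ℝ) i) =
              cdf' μ x * ∏ i : Fin (n + 1), cdf' μ (w i) := by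
            rw [Fin.prod_univ_succ]
            simp
          rw [hlast, hprod, ← ENNReal.ofReal_mul (one_div_nonneg.mpr (cdf'_nonneg μ x))]
          congr 1
          rw [div_mul_div_comm, one_mul]
        · rw [gA, if_neg, gA, if_neg hw, mul_zero]
          intro hcons
          exact hw ((antitone_cons_iff x w).mp hcons.1)
      · rw [if_neg hx, gA, if_neg]
        intro hcons
        exact hx (by simpa using hcons.2 0)
    have hinner : ∀ x : ℝ,
        (∫⁻ w, gA μ (M + 1) s (Fin.cons x w) ∂(Measure.pi fun _ : Fin (n + 1) => μ)) =
        if x ≤ s then ENNReal.ofReal (1 / cdf' μ x) *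
          ENNReal.ofReal (cdf' μ x ^ (M + 1) / ((M : ℝ) + 1) ^ (n + 1)) else 0 := by
      intro x
      rw [lintegral_congr (hsplit x)]
      by_cases hx : x ≤ s
      · simp only [if_pos hx]
        rw [lintegral_const_mul _ (measurable_gA μ (M + 1) x n), ih x]
      · simp only [if_neg hx, lintegral_zero]
    rw [lintegral_congr hinner]
    have hind : (fun x => if x ≤ s then ENNReal.ofReal (1 / cdf' μ x) *
          ENNReal.ofReal (cdf' μ x ^ (M + 1) / ((M : ℝ) + 1) ^ (n + 1)) else 0)
        = (Iic s).indicator (fun x => ENNReal.ofReal (1 / cdf' μ x) *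
          ENNReal.ofReal (cdf' μ x ^ (M + 1) / ((M : ℝ) + 1) ^ (n + 1))) := by
      funext x
      simp [Set.indicator_apply, mem_Iic]
    rw [hind, lintegral_indicator measurableSet_Iic]
    have hD : ((M : ℝ) + 1) ^ (n + 1) ≠ 0 := by positivity
    have h0r := ae_restrict_of_ae (μ := μ) (s := Iic s) (ae_cdf'_ne_zero μ)
    have hpw : ∫⁻ x in Iic s, ENNReal.ofReal (1 / cdf' μ x) *
          ENNReal.ofReal (cdf' μ x ^ (M + 1) / ((M : ℝ) + 1) ^ (n + 1)) ∂μ =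
        ∫⁻ x in Iic s, ENNReal.ofReal (cdf' μ x ^ M) *
          ENNReal.ofReal (1 / ((M : ℝ) + 1) ^ (n + 1)) ∂μ := by
      refine lintegral_congr_ae (h0r.mono fun x hx => ?_)
      dsimp only
      rw [← ENNReal.ofReal_mul (one_div_nonneg.mpr (cdf'_nonneg μ x)),
        ← ENNReal.ofReal_mul (pow_nonneg (cdf'_nonneg μ x) M)]
      congr 1
      field_simp
      ring
    rw [hpw, lintegral_mul_const _ ((measurable_cdf' μ).pow_const M).ennreal_ofReal, K1 μ M s,
      ← ENNReal.ofReal_mul (div_nonneg (pow_nonneg (cdf'_nonneg μ s) _) (by positivity))]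
    congr 1
    rw [div_mul_div_comm, mul_one, ← pow_succ']

end IA

section IC

set_option linter.unusedSectionVars false
set_option maxHeartbeats 3200000

variable (μ : Measure ℝ) [IsProbabilityMeasure μ] [NullSingletonClass μ]

lemma gC_cons (N q : ℕ) (t s x : ℝ) {m : ℕ} (w : Fin (m + 1) → ℝ) :
    gC μ N (q + 1) t s (Fin.cons x w) =
      if t < x ∧ x ≤ s then ENNReal.ofReal (1 / cdf' μ x) * gC μ N q t x w else 0 := by
  by_cases hx : t < x ∧ x ≤ s
  · rw [if_pos hx]
    by_cases hw : Antitone w ∧ (∀ i, w i ≤ x) ∧ (∀ i : Fin (m + 1), (i : ℕ) < q → t < w i) ∧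
        (∀ i : Fin (m + 1), q ≤ (i : ℕ) → w i ≤ t)
    · have hcons : Antitone (Fin.cons x w : Fin (m + 2) → ℝ) ∧
          (∀ i, (Fin.cons x w : Fin (m + 2) → ℝ) i ≤ s) ∧
          (∀ i : Fin (m + 2), (i : ℕ) < q + 1 → t < (Fin.cons x w : Fin (m + 2) → ℝ) i) ∧
          (∀ i : Fin (m + 2), q + 1 ≤ (i : ℕ) → (Fin.cons x w : Fin (m + 2) → ℝ) i ≤ t) := by
        refine ⟨(antitone_cons_iff x w).mpr ⟨hw.1, hw.2.1⟩, fun i => ?_,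
          fun i hi => ?_, fun i hi => ?_⟩
        · rcases Fin.eq_zero_or_eq_succ i with rfl | ⟨j, rfl⟩
          · simpa using hx.2
          · simpa using (hw.2.1 j).trans hx.2
        · rcases Fin.eq_zero_or_eq_succ i with rfl | ⟨j, rfl⟩
          · simpa using hx.1
          · have hj : (j : ℕ) < q := by
              simp only [Fin.val_succ] at hi
              omega
            simpa using hw.2.2.1 j hj
        · rcases Fin.eq_zero_or_eq_succ i with rfl | ⟨j, rfl⟩
          · simp at hi
          · have hj : q ≤ (j : ℕ) := by
              simp only [Fin.val_succ] at hi
              omega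
            simpa using hw.2.2.2 j hj
      rw [gC, if_pos hcons, gC, if_pos hw, core, core]
      have hlast : (Fin.cons x w : Fin (m + 2) → ℝ) (Fin.last (m + 1)) = w (Fin.last m) := by
        rw [← Fin.succ_last, Fin.cons_succ]
      have hprod : ∏ i : Fin (m + 2), cdf' μ ((Fin.cons x w : Fin (m + 2) → ℝ) i) =
          cdf' μ x * ∏ i : Fin (m + 1), cdf' μ (w i) := by
        rw [Fin.prod_univ_succ]
        simp
      rw [hlast, hprod, ← ENNReal.ofReal_mul (one_div_nonneg.mpr (cdf'_nonneg μ x))]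
      congr 1
      rw [div_mul_div_comm, one_mul]
    · rw [gC, if_neg, gC, if_neg hw, mul_zero]
      intro hcons
      refine hw ⟨((antitone_cons_iff x w).mp hcons.1).1,
        ((antitone_cons_iff x w).mp hcons.1).2, fun i hi => ?_, fun i hi => ?_⟩
      · have := hcons.2.2.1 i.succ (by simp only [Fin.val_succ]; omega)
        simpa using this
      · have := hcons.2.2.2 i.succ (by simp only [Fin.val_succ]; omega)
        simpa using this
  · rw [if_neg hx, gC, if_neg]
    intro hcons
    refine hx ⟨?_, ?_⟩
    · have := hcons.2.2.1 0 (by simp)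
      simpa using this
    · simpa using hcons.2.1 0

lemma gT_cons (N q : ℕ) (t x : ℝ) {m : ℕ} (w : Fin (m + 1) → ℝ) :
    gT μ N (q + 1) t (Fin.cons x w) =
      if t < x then ENNReal.ofReal (1 / cdf' μ x) * gC μ N q t x w else 0 := by
  by_cases hx : t < x
  · rw [if_pos hx]
    by_cases hw : Antitone w ∧ (∀ i, w i ≤ x) ∧ (∀ i : Fin (m + 1), (i : ℕ) < q → t < w i) ∧
        (∀ i : Fin (m + 1), q ≤ (i : ℕ) → w i ≤ t)
    · have hcons : Antitone (Fin.cons x w : Fin (m + 2) → ℝ) ∧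
          (∀ i : Fin (m + 2), (i : ℕ) < q + 1 → t < (Fin.cons x w : Fin (m + 2) → ℝ) i) ∧
          (∀ i : Fin (m + 2), q + 1 ≤ (i : ℕ) → (Fin.cons x w : Fin (m + 2) → ℝ) i ≤ t) := by
        refine ⟨(antitone_cons_iff x w).mpr ⟨hw.1, hw.2.1⟩, fun i hi => ?_, fun i hi => ?_⟩
        · rcases Fin.eq_zero_or_eq_succ i with rfl | ⟨j, rfl⟩
          · simpa using hx
          · have hj : (j : ℕ) < q := by
              simp only [Fin.val_succ] at hi
              omega
            simpa using hw.2.2.1 j hj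
        · rcases Fin.eq_zero_or_eq_succ i with rfl | ⟨j, rfl⟩
          · simp at hi
          · have hj : q ≤ (j : ℕ) := by
              simp only [Fin.val_succ] at hi
              omega
            simpa using hw.2.2.2 j hj
      rw [gT, if_pos hcons, gC, if_pos hw, core, core]
      have hlast : (Fin.cons x w : Fin (m + 2) → ℝ) (Fin.last (m + 1)) = w (Fin.last m) := by
        rw [← Fin.succ_last, Fin.cons_succ]
      have hprod : ∏ i : Fin (m + 2), cdf' μ ((Fin.cons x w : Fin (m + 2) → ℝ) i) =
          cdf' μ x * ∏ i : Fin (m + 1), cdf' μ (w i) := by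
        rw [Fin.prod_univ_succ]
        simp
      rw [hlast, hprod, ← ENNReal.ofReal_mul (one_div_nonneg.mpr (cdf'_nonneg μ x))]
      congr 1
      rw [div_mul_div_comm, one_mul]
    · rw [gT, if_neg, gC, if_neg hw, mul_zero]
      intro hcons
      have hAx := (antitone_cons_iff x w).mp hcons.1
      refine hw ⟨hAx.1, hAx.2, fun i hi => ?_, fun i hi => ?_⟩
      · have := hcons.2.1 i.succ (by simp only [Fin.val_succ]; omega)
        simpa using this
      · have := hcons.2.2 i.succ (by simp only [Fin.val_succ]; omega)
        simpa using this
  · rw [if_neg hx, gT, if_neg]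
    intro hcons
    have := hcons.2.1 0 (by simp)
    exact hx (by simpa using this)

lemma measurable_logfac (q : ℕ) (t : ℝ) : Measurable fun x : ℝ =>
    ENNReal.ofReal (1 / cdf' μ x * (Real.log (cdf' μ x) - Real.log (cdf' μ t)) ^ q) :=
  ((measurable_const.div (measurable_cdf' μ)).mul
    (((Real.measurable_log.comp (measurable_cdf' μ)).sub measurable_const).pow_const q)).ennreal_ofReal

lemma IC (M : ℕ) (t : ℝ) (ht : 0 < cdf' μ t) : ∀ q n : ℕ, q ≤ n → ∀ s : ℝ, t ≤ s →
    ∫⁻ w, gC μ (M + 1) q t s w ∂(Measure.pi fun _ : Fin (n + 1) => μ) =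
      ENNReal.ofReal ((Real.log (cdf' μ s) - Real.log (cdf' μ t)) ^ q / (q.factorial : ℝ) *
        cdf' μ t ^ (M + 1) / ((M : ℝ) + 1) ^ (n + 1 - q)) := by
  intro q
  induction q with
  | zero =>
    intro n _ s hs
    have hcongr : ∀ w : Fin (n + 1) → ℝ, gC μ (M + 1) 0 t s w = gA μ (M + 1) t w := by
      intro w
      rw [gC, gA]
      refine if_congr ⟨?_, ?_⟩ rfl rfl
      · rintro ⟨h1, _, _, h4⟩
        exact ⟨h1, fun i => h4 i (Nat.zero_le _)⟩
      · rintro ⟨h1, h2⟩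
        exact ⟨h1, fun i => (h2 i).trans hs, fun i hi => absurd hi (Nat.not_lt_zero _),
          fun i _ => h2 i⟩
    rw [lintegral_congr hcongr, IA μ M n t]
    norm_num
  | succ q ihq =>
    intro n hqn s hs
    obtain ⟨m, rfl⟩ : ∃ m, n = m + 1 := ⟨n - 1, by omega⟩
    have hqm : q ≤ m := by omega
    rw [lintegral_pi_succ μ (m + 1) _ (measurable_gC μ (M + 1) (q + 1) t s (m + 1))]
    have hinner : ∀ x : ℝ,
        (∫⁻ w, gC μ (M + 1) (q + 1) t s (Fin.cons x w) ∂(Measure.pi fun _ : Fin (m + 1) => μ)) =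
        if t < x ∧ x ≤ s then ENNReal.ofReal (1 / cdf' μ x) *
          ENNReal.ofReal ((Real.log (cdf' μ x) - Real.log (cdf' μ t)) ^ q / (q.factorial : ℝ) *
            cdf' μ t ^ (M + 1) / ((M : ℝ) + 1) ^ (m + 1 - q)) else 0 := by
      intro x
      rw [lintegral_congr (fun w => gC_cons μ (M + 1) q t s x w)]
      by_cases hx : t < x ∧ x ≤ s
      · simp only [if_pos hx]
        rw [lintegral_const_mul _ (measurable_gC μ (M + 1) q t x m), ihq m hqm x hx.1.le]
      · simp only [if_neg hx, lintegral_zero]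
    rw [lintegral_congr hinner]
    have hind : (fun x => if t < x ∧ x ≤ s then ENNReal.ofReal (1 / cdf' μ x) *
          ENNReal.ofReal ((Real.log (cdf' μ x) - Real.log (cdf' μ t)) ^ q / (q.factorial : ℝ) *
            cdf' μ t ^ (M + 1) / ((M : ℝ) + 1) ^ (m + 1 - q)) else 0)
        = (Ioc t s).indicator (fun x => ENNReal.ofReal (1 / cdf' μ x) *
          ENNReal.ofReal ((Real.log (cdf' μ x) - Real.log (cdf' μ t)) ^ q / (q.factorial : ℝ) *
            cdf' μ t ^ (M + 1) / ((M : ℝ) + 1) ^ (m + 1 - q))) := by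
      funext x
      simp [Set.indicator_apply, mem_Ioc]
    rw [hind, lintegral_indicator measurableSet_Ioc]
    have hq0 : (0:ℝ) < (q.factorial : ℝ) := by positivity
    have hD : (0:ℝ) < ((M : ℝ) + 1) ^ (m + 1 - q) := by positivity
    have hpw : ∫⁻ x in Ioc t s, ENNReal.ofReal (1 / cdf' μ x) *
          ENNReal.ofReal ((Real.log (cdf' μ x) - Real.log (cdf' μ t)) ^ q / (q.factorial : ℝ) *
            cdf' μ t ^ (M + 1) / ((M : ℝ) + 1) ^ (m + 1 - q)) ∂μ =
        ∫⁻ x in Ioc t s,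
          ENNReal.ofReal (1 / cdf' μ x * (Real.log (cdf' μ x) - Real.log (cdf' μ t)) ^ q) *
          ENNReal.ofReal (cdf' μ t ^ (M + 1) /
            ((q.factorial : ℝ) * ((M : ℝ) + 1) ^ (m + 1 - q))) ∂μ := by
      refine setLIntegral_congr_fun measurableSet_Ioc (fun x hx => ?_)
      have hL : 0 ≤ Real.log (cdf' μ x) - Real.log (cdf' μ t) :=
        sub_nonneg.mpr (Real.log_le_log ht (cdf'_mono μ hx.1.le))
      rw [← ENNReal.ofReal_mul (one_div_nonneg.mpr (cdf'_nonneg μ x)),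
        ← ENNReal.ofReal_mul (mul_nonneg (one_div_nonneg.mpr (cdf'_nonneg μ x)) (pow_nonneg hL q))]
      congr 1
      ring
    have hLs : 0 ≤ Real.log (cdf' μ s) - Real.log (cdf' μ t) :=
      sub_nonneg.mpr (Real.log_le_log ht (cdf'_mono μ hs))
    rw [hpw, lintegral_mul_const _ (measurable_logfac μ q t), K2 μ q t s ht hs,
      ← ENNReal.ofReal_mul (div_nonneg (pow_nonneg hLs _) (by positivity))]
    congr 1
    have hfac : ((q + 1).factorial : ℝ) = ((q : ℝ) + 1) * (q.factorial : ℝ) := by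
      rw [Nat.factorial_succ]
      push_cast
      ring
    have hexp : m + 1 + 1 - (q + 1) = m + 1 - q := by omega
    rw [hexp, hfac, div_mul_div_comm, div_mul_eq_mul_div, div_div, mul_assoc]

lemma ICtop (M : ℕ) (t : ℝ) (ht : 0 < cdf' μ t) : ∀ q n : ℕ, q ≤ n →
    ∫⁻ w, gT μ (M + 1) q t w ∂(Measure.pi fun _ : Fin (n + 1) => μ) =
      ENNReal.ofReal ((-Real.log (cdf' μ t)) ^ q / (q.factorial : ℝ) *
        cdf' μ t ^ (M + 1) / ((M : ℝ) + 1) ^ (n + 1 - q)) := by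
  intro q
  cases q with
  | zero =>
    intro n _
    have hcongr : ∀ w : Fin (n + 1) → ℝ, gT μ (M + 1) 0 t w = gC μ (M + 1) 0 t t w := by
      intro w
      rw [gT, gC]
      refine if_congr ⟨?_, ?_⟩ rfl rfl
      · rintro ⟨h1, _, h3⟩
        exact ⟨h1, fun i => h3 i (Nat.zero_le _), fun i hi => absurd hi (Nat.not_lt_zero _), h3⟩
      · rintro ⟨h1, _, _, h4⟩
        exact ⟨h1, fun i hi => absurd hi (Nat.not_lt_zero _), h4⟩
    rw [lintegral_congr hcongr, IC μ M t ht 0 n (Nat.zero_le n) t le_rfl]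
    norm_num
  | succ q =>
    intro n hqn
    obtain ⟨m, rfl⟩ : ∃ m, n = m + 1 := ⟨n - 1, by omega⟩
    have hqm : q ≤ m := by omega
    rw [lintegral_pi_succ μ (m + 1) _ (measurable_gT μ (M + 1) (q + 1) t (m + 1))]
    have hinner : ∀ x : ℝ,
        (∫⁻ w, gT μ (M + 1) (q + 1) t (Fin.cons x w) ∂(Measure.pi fun _ : Fin (m + 1) => μ)) =
        if t < x then ENNReal.ofReal (1 / cdf' μ x) *
          ENNReal.ofReal ((Real.log (cdf' μ x) - Real.log (cdf' μ t)) ^ q / (q.factorial : ℝ) *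
            cdf' μ t ^ (M + 1) / ((M : ℝ) + 1) ^ (m + 1 - q)) else 0 := by
      intro x
      rw [lintegral_congr (fun w => gT_cons μ (M + 1) q t x w)]
      by_cases hx : t < x
      · simp only [if_pos hx]
        rw [lintegral_const_mul _ (measurable_gC μ (M + 1) q t x m), IC μ M t ht q m hqm x hx.le]
      · simp only [if_neg hx, lintegral_zero]
    rw [lintegral_congr hinner]
    have hind : (fun x => if t < x then ENNReal.ofReal (1 / cdf' μ x) *
          ENNReal.ofReal ((Real.log (cdf' μ x) - Real.log (cdf' μ t)) ^ q / (q.factorial : ℝ) *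
            cdf' μ t ^ (M + 1) / ((M : ℝ) + 1) ^ (m + 1 - q)) else 0)
        = (Ioi t).indicator (fun x => ENNReal.ofReal (1 / cdf' μ x) *
          ENNReal.ofReal ((Real.log (cdf' μ x) - Real.log (cdf' μ t)) ^ q / (q.factorial : ℝ) *
            cdf' μ t ^ (M + 1) / ((M : ℝ) + 1) ^ (m + 1 - q))) := by
      funext x
      simp [Set.indicator_apply, mem_Ioi]
    rw [hind, lintegral_indicator measurableSet_Ioi]
    have hpw : ∫⁻ x in Ioi t, ENNReal.ofReal (1 / cdf' μ x) *
          ENNReal.ofReal ((Real.log (cdf' μ x) - Real.log (cdf' μ t)) ^ q / (q.factorial : ℝ) *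
            cdf' μ t ^ (M + 1) / ((M : ℝ) + 1) ^ (m + 1 - q)) ∂μ =
        ∫⁻ x in Ioi t,
          ENNReal.ofReal (1 / cdf' μ x * (Real.log (cdf' μ x) - Real.log (cdf' μ t)) ^ q) *
          ENNReal.ofReal (cdf' μ t ^ (M + 1) /
            ((q.factorial : ℝ) * ((M : ℝ) + 1) ^ (m + 1 - q))) ∂μ := by
      refine setLIntegral_congr_fun measurableSet_Ioi (fun x hx => ?_)
      have hL : 0 ≤ Real.log (cdf' μ x) - Real.log (cdf' μ t) :=
        sub_nonneg.mpr (Real.log_le_log ht (cdf'_mono μ (le_of_lt hx)))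
      rw [← ENNReal.ofReal_mul (one_div_nonneg.mpr (cdf'_nonneg μ x)),
        ← ENNReal.ofReal_mul (mul_nonneg (one_div_nonneg.mpr (cdf'_nonneg μ x)) (pow_nonneg hL q))]
      congr 1
      ring
    have hLs : 0 ≤ (0:ℝ) - Real.log (cdf' μ t) :=
      sub_nonneg.mpr (Real.log_nonpos (cdf'_nonneg μ t) (cdf'_le_one μ t))
    rw [hpw, lintegral_mul_const _ (measurable_logfac μ q t), K3 μ q t ht,
      ← ENNReal.ofReal_mul (div_nonneg (pow_nonneg hLs _) (by positivity))]
    congr 1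
    have hfac : ((q + 1).factorial : ℝ) = ((q : ℝ) + 1) * (q.factorial : ℝ) := by
      rw [Nat.factorial_succ]
      push_cast
      ring
    have hexp : m + 1 + 1 - (q + 1) = m + 1 - q := by omega
    rw [hexp, hfac, zero_sub, div_mul_div_comm, div_mul_eq_mul_div, div_div, mul_assoc]

end IC

section Main

set_option linter.unusedSectionVars false
set_option maxHeartbeats 3200000

lemma card_filter_iff {n : ℕ} (t : ℝ) (v : Fin n → ℝ) (hv : Antitone v) (p : ℕ) (hpn : p < n) :
    (Finset.univ.filter fun i : Fin n => t < v i).card = p ↔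
      (∀ i : Fin n, (i : ℕ) < p → t < v i) ∧ (∀ i : Fin n, p ≤ (i : ℕ) → v i ≤ t) := by
  set Sf := Finset.univ.filter fun i : Fin n => t < v i with hSf
  have hmemf : ∀ i : Fin n, i ∈ Sf ↔ t < v i := fun i => by simp [hSf]
  have lower : ∀ i j : Fin n, i ≤ j → j ∈ Sf → i ∈ Sf := by
    intro i j hij hj
    rw [hmemf] at hj ⊢
    exact lt_of_lt_of_le hj (hv hij)
  have mem_iff : ∀ i : Fin n, i ∈ Sf ↔ (i : ℕ) < Sf.card := by
    intro i
    constructor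
    · intro hi
      have hsub : Finset.Iic i ⊆ Sf := fun j hj => lower j i (Finset.mem_Iic.mp hj) hi
      have := Finset.card_le_card hsub
      rw [Fin.card_Iic] at this
      omega
    · intro hi
      by_contra hnot
      have hsub : Sf ⊆ Finset.Iio i := by
        intro j hj
        rw [Finset.mem_Iio]
        rcases lt_or_ge j i with h | h
        · exact h
        · exact absurd (lower i j h hj) hnot
      have := Finset.card_le_card hsub
      rw [Fin.card_Iio] at this
      omega
  constructor
  · intro hcard
    constructor
    · intro i hip
      rw [← hmemf, mem_iff, hcard]
      exact hip
    · intro i hpi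
      have hni : i ∉ Sf := by
        rw [mem_iff, hcard]
        omega
      exact not_lt.mp fun hlt => hni ((hmemf i).mpr hlt)
  · rintro ⟨h1, h2⟩
    have hset : Sf = Finset.Iio (⟨p, hpn⟩ : Fin n) := by
      ext j
      rw [hmemf, Finset.mem_Iio]
      constructor
      · intro hj
        rw [Fin.lt_def]
        by_contra hc
        push_neg at hc
        exact absurd hj (not_lt.mpr (h2 j hc))
      · intro hj
        exact h1 j (Fin.lt_def.mp hj)
    rw [hset, Fin.card_Iio]

variable (μ : Measure ℝ) [IsProbabilityMeasure μ] [NullSingletonClass μ]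

theorem muN_measure_exactly_p_exceed' (N : ℕ) (hN : 1 ≤ N) (t : ℝ) (ht : 0 < cdf' μ t)
    (p : ℕ) (hp : p ≤ N - 1) :
    ((Measure.pi fun _ : Fin N => μ).withDensity fun v =>
        ENNReal.ofReal
          (if Antitone v ∧ ∀ i : Fin N, cdf' μ (v i) ≠ 0 then
            (N : ℝ) ^ N * ∏ i : Fin N, cdf' μ (v ⟨N - 1, Nat.sub_lt hN Nat.one_pos⟩) / cdf' μ (v i)
          else 0))
      {v : Fin N → ℝ | (Finset.univ.filter fun i : Fin N => t < v i).card = p} =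
        ENNReal.ofReal
          ((N : ℝ) ^ p / (p.factorial : ℝ) * cdf' μ t ^ N * (-Real.log (cdf' μ t)) ^ p) := by
  obtain ⟨m, rfl⟩ : ∃ m, N = m + 1 := ⟨N - 1, by omega⟩
  have hpm : p ≤ m := by omega
  have hS : MeasurableSet
      {v : Fin (m + 1) → ℝ | (Finset.univ.filter fun i : Fin (m + 1) => t < v i).card = p} := by
    have hrw : {v : Fin (m + 1) → ℝ | (Finset.univ.filter fun i : Fin (m + 1) => t < v i).card = p} =
        (fun v : Fin (m + 1) → ℝ => ∑ i : Fin (m + 1), if t < v i then 1 else 0) ⁻¹' {p} := by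
      ext v
      simp only [mem_setOf_eq, mem_preimage, mem_singleton_iff, Finset.card_filter]
    rw [hrw]
    exact (Finset.measurable_sum _ fun i _ => Measurable.ite
      (measurableSet_lt measurable_const (measurable_pi_apply i)) measurable_const
      measurable_const) (measurableSet_singleton p)
  rw [withDensity_apply _ hS, ← lintegral_indicator hS]
  have hae : ∀ᵐ v ∂(Measure.pi fun _ : Fin (m + 1) => μ), ∀ i, cdf' μ (v i) ≠ 0 := by
    rw [ae_iff]
    have hsub : {v : Fin (m + 1) → ℝ | ¬ ∀ i, cdf' μ (v i) ≠ 0} ⊆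
        ⋃ i : Fin (m + 1), (fun v : Fin (m + 1) → ℝ => v i) ⁻¹' {x | cdf' μ x = 0} := by
      intro v hv
      push_neg at hv
      obtain ⟨i, hi⟩ := hv
      exact mem_iUnion.mpr ⟨i, hi⟩
    exact measure_mono_null hsub (measure_iUnion_null fun i =>
      Measure.pi_eval_preimage_null _ (measure_cdf'_eq_zero μ))
  have key : ∀ v : Fin (m + 1) → ℝ, (∀ i, cdf' μ (v i) ≠ 0) →
      ({v : Fin (m + 1) → ℝ | (Finset.univ.filter fun i : Fin (m + 1) => t < v i).card = p}.indicator
        (fun v => ENNReal.ofReal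
          (if Antitone v ∧ ∀ i : Fin (m + 1), cdf' μ (v i) ≠ 0 then
            ((m + 1 : ℕ) : ℝ) ^ (m + 1) *
              ∏ i : Fin (m + 1), cdf' μ (v ⟨m + 1 - 1, by omega⟩) / cdf' μ (v i)
          else 0))) v =
      ENNReal.ofReal (((m + 1 : ℕ) : ℝ) ^ (m + 1)) * gT μ (m + 1) p t v := by
    intro v hv
    by_cases hA : Antitone v
    · by_cases hvS : v ∈ {v : Fin (m + 1) → ℝ |
          (Finset.univ.filter fun i : Fin (m + 1) => t < v i).card = p}
      · rw [Set.indicator_of_mem hvS]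
        have hcond := (card_filter_iff t v hA p (by omega)).mp hvS
        rw [if_pos ⟨hA, hv⟩, gT, if_pos ⟨hA, hcond.1, hcond.2⟩, core,
          ← ENNReal.ofReal_mul (by positivity : (0:ℝ) ≤ ((m + 1 : ℕ) : ℝ) ^ (m + 1))]
        congr 1
        rw [Finset.prod_div_distrib, Finset.prod_const, Finset.card_univ, Fintype.card_fin]
        rfl
      · rw [Set.indicator_of_notMem hvS, gT, if_neg, mul_zero]
        intro hcond
        exact hvS ((card_filter_iff t v hA p (by omega)).mpr ⟨hcond.2.1, hcond.2.2⟩)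
    · have h0 : gT μ (m + 1) p t v = 0 := by
        rw [gT, if_neg]
        exact fun hc => hA hc.1
      rw [h0, mul_zero]
      by_cases hvS : v ∈ {v : Fin (m + 1) → ℝ |
          (Finset.univ.filter fun i : Fin (m + 1) => t < v i).card = p}
      · rw [Set.indicator_of_mem hvS, if_neg (fun hc => hA hc.1), ENNReal.ofReal_zero]
      · rw [Set.indicator_of_notMem hvS]
  rw [lintegral_congr_ae (hae.mono key),
    lintegral_const_mul _ (measurable_gT μ (m + 1) p t m), ICtop μ m t ht p m hpm,
    ← ENNReal.ofReal_mul (by positivity)]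
  congr 1
  have hLs : 0 ≤ -Real.log (cdf' μ t) :=
    neg_nonneg.mpr (Real.log_nonpos (cdf'_nonneg μ t) (cdf'_le_one μ t))
  have h1 : ((m : ℝ) + 1) ^ (m + 1) = ((m : ℝ) + 1) ^ (m + 1 - p) * ((m : ℝ) + 1) ^ p := by
    rw [← pow_add]
    congr 1
    omega
  have hne : ((m : ℝ) + 1) ^ (m + 1 - p) ≠ 0 := by positivity
  push_cast
  rw [h1]
  field_simp

end Main

/-- **Exceedance probabilities under `μ_N`.**
Let `μ` be an atomless probability measure on `ℝ` with distribution function `F` and let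
`μ_N` be the measure on `ℝ^N` with density `N^N 1_{t_1 ≥ ⋯ ≥ t_N} ∏_i F(t_N)/F(t_i)`
with respect to `μ^{⊗N}`.  For every `t` with `F(t) > 0` and every `0 ≤ p ≤ N - 1`, the
`μ_N`-measure of the set of vectors with exactly `p` coordinates `> t` equals
`(N^p / p!) F(t)^N (-log F(t))^p`. -/
theorem muN_measure_exactly_p_exceed (μ : Measure ℝ) [IsProbabilityMeasure μ] [NullSingletonClass μ]
    (N : ℕ) (hN : 1 ≤ N) (t : ℝ) (ht : 0 < cdf' μ t) (p : ℕ) (hp : p ≤ N - 1) :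
    ((Measure.pi fun _ : Fin N => μ).withDensity fun v =>
        ENNReal.ofReal
          (if Antitone v ∧ ∀ i : Fin N, cdf' μ (v i) ≠ 0 then
            (N : ℝ) ^ N * ∏ i : Fin N, cdf' μ (v ⟨N - 1, by omega⟩) / cdf' μ (v i)
          else 0))
      {v : Fin N → ℝ | (Finset.univ.filter fun i : Fin N => t < v i).card = p} =
        ENNReal.ofReal
          ((N : ℝ) ^ p / (p.factorial : ℝ) * cdf' μ t ^ N * (-Real.log (cdf' μ t)) ^ p) := by
  exact muN_measure_exactly_p_exceed' μ N hN t ht p hp
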